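/- The TBT Sequence operator is associative: for any trajectory x and time steps t1 ≤ t2, x, t1, t2 ⊨ Seq(Seq(φ1, φ2), φ3) if and only if x, t1, t2 ⊨ Seq(φ1, Seq(φ2, φ3)). -/
import Mathlib


/-- Booleanized satisfaction of the TBT Sequence operator over partial
    trajectories, given satisfaction relations for the two subformulas. -/
def SeqSat (A B : ℕ → ℕ → Prop) (t1 t2 : ℕ) : Prop :=
  ∃ τ, t1 ≤ τ ∧ τ + 1 ≤ t2 ∧ A t1 τ ∧ B (τ + 1) t2

/-- The TBT Sequence operator is associative. -/
theorem seq_assoc (S1 S2 S3 : ℕ → ℕ → Prop) (t1 t2 : ℕ) (h : t1 ≤ t2) :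
    SeqSat (SeqSat S1 S2) S3 t1 t2 ↔ SeqSat S1 (SeqSat S2 S3) t1 t2 := by
  constructor
  · rintro ⟨τ, hτ1, hτ2, ⟨σ, hσ1, hσ2, hA, hB⟩, hC⟩
    exact ⟨σ, hσ1, by omega, hA, τ, by omega, hτ2, hB, hC⟩
  · rintro ⟨σ, hσ1, hσ2, hA, τ, hτ1, hτ2, hB, hC⟩
    exact ⟨τ, by omega, hτ2, ⟨σ, hσ1, by omega, hA, hB⟩, hC⟩
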